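/- Let N ≥ 1, α ∈ (0,2), λ ∈ ℝ, and let p: ℝ^N → (1,∞) be measurable with 1 < p⁻ ≤ p(x) ≤ p⁺ < ∞ for a.e. x. Let u be a weak solution to (−Δ)^{α/2}u + λΔu ≥ |u|^{p(x)} on ℝ^N. Then there exists a constant C > 0, depending only on p⁻, p⁺ and λ, such that for every φ ∈ H²(ℝ^N) with φ(x) > 0 for all x: ∫_{ℝ^N} |u(x)|^{p(x)} φ(x) dx ≤ C ( ∫_{ℝ^N} φ(x)^{−1/(p(x)−1)} |(−Δ)^{α/2}φ(x)|^{p(x)/(p(x)−1)} dx + |λ| ∫_{ℝ^N} φ(x)^{−1/(p(x)−1)} |Δφ(x)|^{p(x)/(p(x)−1)} dx ). -/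

import Mathlib

open MeasureTheory FourierTransform
open scoped ENNReal NNReal

/-- The fractional Laplacian `(-Δ)^s` of a real-valued function on `ℝ^N`, defined via the
Fourier transform: `(-Δ)^s f = 𝓕⁻(‖ξ‖^(2s) • 𝓕 f)`. -/
noncomputable def fracLap {N : ℕ} (s : ℝ) (f : EuclideanSpace ℝ (Fin N) → ℝ) :
    EuclideanSpace ℝ (Fin N) → ℝ :=
  fun x => (𝓕⁻
    (fun ξ => (((‖ξ‖ ^ (2 * s) : ℝ) : ℂ)) *
      𝓕 (fun y => ((f y : ℝ) : ℂ)) ξ) x).re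

/-- The Laplacian `Δ`, realized through the Fourier definition as `-(-Δ)^1`. -/
noncomputable def lap {N : ℕ} (f : EuclideanSpace ℝ (Fin N) → ℝ) :
    EuclideanSpace ℝ (Fin N) → ℝ :=
  fun x => -(fracLap 1 f x)

/-- Membership in the Sobolev space `H²(ℝ^N)`: `f ∈ L²` and
`ξ ↦ (1 + ‖ξ‖²) 𝓕f(ξ) ∈ L²`. -/
def memH2 {N : ℕ} (f : EuclideanSpace ℝ (Fin N) → ℝ) : Prop :=
  MemLp f 2 (volume : Measure (EuclideanSpace ℝ (Fin N))) ∧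
  MemLp (fun ξ : EuclideanSpace ℝ (Fin N) =>
    (((1 + ‖ξ‖ ^ 2 : ℝ) : ℂ)) * 𝓕 (fun y => ((f y : ℝ) : ℂ)) ξ) 2 volume

lemma fracLap_measurable {N : ℕ} (s : ℝ) (f : EuclideanSpace ℝ (Fin N) → ℝ) :
    Measurable (fracLap s f) := by
  classical
  set F : EuclideanSpace ℝ (Fin N) → ℂ := fun ξ => (((‖ξ‖ ^ (2 * s) : ℝ) : ℂ)) *
      𝓕 (fun y => ((f y : ℝ) : ℂ)) ξ with hFdef
  have hL : Continuous fun p : (EuclideanSpace ℝ (Fin N)) × (EuclideanSpace ℝ (Fin N)) =>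
      (-(innerₗ (EuclideanSpace ℝ (Fin N)))) p.1 p.2 := by
    have h1 : Continuous fun p : (EuclideanSpace ℝ (Fin N)) × (EuclideanSpace ℝ (Fin N)) =>
        (inner ℝ p.1 p.2 : ℝ) := continuous_inner
    exact h1.neg
  by_cases hInt : Integrable F volume
  · have hc : Continuous fun x => 𝓕⁻ F x :=
      VectorFourier.fourierIntegral_continuous Real.continuous_fourierChar hL hInt
    have : fracLap s f = fun x => (𝓕⁻ F x).re := rfl
    rw [this]
    exact Complex.measurable_re.comp hc.measurable
  · have hz : ∀ x, 𝓕⁻ F x = 0 := by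
      intro x
      show VectorFourier.fourierIntegral Real.fourierChar volume (-innerₗ _) F x = 0
      unfold VectorFourier.fourierIntegral
      refine integral_undef ?_
      intro hcon
      exact hInt ((VectorFourier.fourierIntegral_convergent_iff
        Real.continuous_fourierChar hL x).1 hcon)
    have : fracLap s f = fun _ => (0 : ℝ) := by
      funext x
      show (𝓕⁻ F x).re = 0
      rw [hz x]; simp
    rw [this]; exact measurable_const

lemma young_aux {pm px t a b c : ℝ} (hpm : 1 < pm) (hpx : pm ≤ px)
    (ht0 : 0 < t) (ht1 : t ≤ 1) (hc : 0 < c) :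
    |a * b| ≤ t ^ pm * (|a| ^ px * c) +
      t ^ (-(pm / (pm - 1))) * (c ^ (-1 / (px - 1)) * |b| ^ (px / (px - 1))) := by
  have h1 : 1 < px := lt_of_lt_of_le hpm hpx
  have hx0 : (0:ℝ) < px := lt_trans one_pos h1
  have hx1 : (0:ℝ) < px - 1 := sub_pos.2 h1
  have hm1 : (0:ℝ) < pm - 1 := sub_pos.2 hpm
  set q : ℝ := px / (px - 1) with hq
  have hq0 : 0 < q := div_pos hx0 hx1
  have hq1 : 1 ≤ q := by rw [hq, le_div_iff₀ hx1]; linarith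
  have hqm : q ≤ pm / (pm - 1) := by
    rw [hq, div_le_div_iff₀ hx1 hm1]; nlinarith
  have hpq : px.HolderConjugate q := Real.HolderConjugate.conjExponent h1
  set X : ℝ := t * (|a| * c ^ (1 / px)) with hX
  set Y : ℝ := t⁻¹ * (|b| * c ^ (-(1 / px))) with hY
  have hX0 : 0 ≤ X := by positivity
  have hY0 : 0 ≤ Y := by positivity
  have hcc : c ^ (1 / px) * c ^ (-(1 / px)) = 1 := by
    rw [← Real.rpow_add hc]; simp
  have hXY : |a * b| = X * Y := by
    have : X * Y = (t * t⁻¹) * ((c ^ (1 / px) * c ^ (-(1 / px))) * (|a| * |b|)) := by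
      rw [hX, hY]; ring
    rw [abs_mul, this, mul_inv_cancel₀ ht0.ne', hcc, one_mul, one_mul]
  have hyoung : X * Y ≤ X ^ px / px + Y ^ q / q :=
    Real.young_inequality_of_nonneg hX0 hY0 hpq
  have hXpow : X ^ px ≤ t ^ pm * (|a| ^ px * c) := by
    have e1 : X ^ px = t ^ px * (|a| ^ px * c) := by
      rw [hX, Real.mul_rpow ht0.le (by positivity),
        Real.mul_rpow (abs_nonneg a) (by positivity),
        ← Real.rpow_mul hc.le, one_div, inv_mul_cancel₀ hx0.ne', Real.rpow_one]
    rw [e1]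
    exact mul_le_mul_of_nonneg_right
      (Real.rpow_le_rpow_of_exponent_ge ht0 ht1 hpx) (by positivity)
  have hYpow : Y ^ q ≤ t ^ (-(pm / (pm - 1))) * (c ^ (-1 / (px - 1)) * |b| ^ q) := by
    have e2 : Y ^ q = t ^ (-q) * (c ^ (-1 / (px - 1)) * |b| ^ q) := by
      have hti : t⁻¹ ^ q = t ^ (-q) := by
        rw [Real.inv_rpow ht0.le, Real.rpow_neg ht0.le]
      have hce : (c ^ (-(1 / px))) ^ q = c ^ (-1 / (px - 1)) := by
        rw [← Real.rpow_mul hc.le]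
        congr 1
        rw [hq]
        field_simp
      rw [hY, Real.mul_rpow (by positivity) (by positivity),
        Real.mul_rpow (abs_nonneg b) (by positivity), hti, hce]
      ring
    rw [e2]
    exact mul_le_mul_of_nonneg_right
      (Real.rpow_le_rpow_of_exponent_ge ht0 ht1 (neg_le_neg hqm)) (by positivity)
  calc |a * b| = X * Y := hXY
    _ ≤ X ^ px / px + Y ^ q / q := hyoung
    _ ≤ X ^ px + Y ^ q := by
        gcongr
        · exact div_le_self (by positivity) h1.le
        · exact div_le_self (by positivity) hq1
    _ ≤ t ^ pm * (|a| ^ px * c) +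
        t ^ (-(pm / (pm - 1))) * (c ^ (-1 / (px - 1)) * |b| ^ q) :=
      add_le_add hXpow hYpow

theorem weak_solution_capacity_bound
    (N : ℕ) (hN : 1 ≤ N) (α : ℝ) (hα : α ∈ Set.Ioo (0 : ℝ) 2) (lam : ℝ)
    (p : EuclideanSpace ℝ (Fin N) → ℝ) (hpmeas : Measurable p)
    (pminus pplus : ℝ) (hp1 : 1 < pminus)
    (hpbd : ∀ᵐ x : EuclideanSpace ℝ (Fin N) ∂(volume : Measure (EuclideanSpace ℝ (Fin N))),
      pminus ≤ p x ∧ p x ≤ pplus)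
    (u : EuclideanSpace ℝ (Fin N) → ℝ)
    (hu2 : MemLp u 2 (volume : Measure (EuclideanSpace ℝ (Fin N))))
    (hup : ∃ μ₀ : ℝ, 0 < μ₀ ∧
      (∫⁻ x : EuclideanSpace ℝ (Fin N), ENNReal.ofReal (|u x / μ₀| ^ (2 * p x))) < ⊤)
    (hweak : ∀ φ : EuclideanSpace ℝ (Fin N) → ℝ, memH2 φ → (∀ x, 0 ≤ φ x) →
      (∫⁻ x : EuclideanSpace ℝ (Fin N), ENNReal.ofReal (|u x| ^ (p x) * φ x)) ≤
        ENNReal.ofReal ((∫ x : EuclideanSpace ℝ (Fin N), u x * fracLap (α / 2) φ x) +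
          lam * ∫ x : EuclideanSpace ℝ (Fin N), u x * lap φ x)) :
    ∃ C : ℝ, 0 < C ∧
      ∀ φ : EuclideanSpace ℝ (Fin N) → ℝ, memH2 φ → (∀ x, 0 < φ x) →
        (∫⁻ x : EuclideanSpace ℝ (Fin N), ENNReal.ofReal (|u x| ^ (p x) * φ x)) ≤
          ENNReal.ofReal C *
            ((∫⁻ x : EuclideanSpace ℝ (Fin N), ENNReal.ofReal
                (φ x ^ (-1 / (p x - 1)) * |fracLap (α / 2) φ x| ^ (p x / (p x - 1)))) +
              ENNReal.ofReal |lam| *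
              (∫⁻ x : EuclideanSpace ℝ (Fin N), ENNReal.ofReal
                (φ x ^ (-1 / (p x - 1)) * |lap φ x| ^ (p x / (p x - 1))))) := by
  have hlam0 : (0:ℝ) < 1 + |lam| := by positivity
  set ε : ℝ := (2 * (1 + |lam|))⁻¹ with hεdef
  have hε0 : 0 < ε := by positivity
  have hε1 : ε ≤ 1 := by
    rw [hεdef]
    rw [inv_le_one_iff₀]
    right; nlinarith [abs_nonneg lam]
  set t : ℝ := ε ^ (1 / pminus) with htdef
  have ht0 : 0 < t := Real.rpow_pos_of_pos hε0 _
  have ht1 : t ≤ 1 := Real.rpow_le_one hε0.le hε1 (by positivity)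
  have hteq : t ^ pminus = ε := by
    rw [htdef, ← Real.rpow_mul hε0.le, one_div,
      inv_mul_cancel₀ (ne_of_gt (lt_trans one_pos hp1)), Real.rpow_one]
  set C0 : ℝ := t ^ (-(pminus / (pminus - 1))) with hC0def
  have hC00 : 0 < C0 := Real.rpow_pos_of_pos ht0 _
  refine ⟨2 * C0, by positivity, ?_⟩
  intro φ hφH2 hφpos
  set g := fracLap (α / 2) φ with hgdef
  set h := lap φ with hhdef
  have hgm : Measurable g := fracLap_measurable _ _
  have hhm : Measurable h := by
    have : h = fun x => -(fracLap 1 φ x) := rfl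
    rw [this]; exact (fracLap_measurable 1 φ).neg
  have hum : AEMeasurable u volume := hu2.aestronglyMeasurable.aemeasurable
  have hφm : AEMeasurable φ volume := hφH2.1.aestronglyMeasurable.aemeasurable
  set I := ∫⁻ x : EuclideanSpace ℝ (Fin N), ENNReal.ofReal (|u x| ^ (p x) * φ x) with hIdef
  set Jg := ∫⁻ x : EuclideanSpace ℝ (Fin N), ENNReal.ofReal
      (φ x ^ (-1 / (p x - 1)) * |g x| ^ (p x / (p x - 1))) with hJgdef
  set Jh := ∫⁻ x : EuclideanSpace ℝ (Fin N), ENNReal.ofReal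
      (φ x ^ (-1 / (p x - 1)) * |h x| ^ (p x / (p x - 1))) with hJhdef
  have hf1m : AEMeasurable (fun x => ENNReal.ofReal (|u x| ^ (p x) * φ x)) volume :=
    (((continuous_abs.measurable.comp_aemeasurable hum).pow hpmeas.aemeasurable).mul hφm).ennreal_ofReal
  have hexp1 : Measurable fun x => -1 / (p x - 1) :=
    (measurable_const.div (hpmeas.sub measurable_const))
  have hexp2 : Measurable fun x => p x / (p x - 1) :=
    (hpmeas.div (hpmeas.sub measurable_const))
  have hI_le := hweak φ hφH2 (fun x => (hφpos x).le)
  have hIfin : I ≠ ⊤ := (lt_of_le_of_lt hI_le ENNReal.ofReal_lt_top).ne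
  -- the two key bounds
  have key : ∀ v : EuclideanSpace ℝ (Fin N) → ℝ, Measurable v →
      (∫⁻ x, (‖u x * v x‖₊ : ℝ≥0∞)) ≤ ENNReal.ofReal ε * I + ENNReal.ofReal C0 *
        ∫⁻ x, ENNReal.ofReal (φ x ^ (-1 / (p x - 1)) * |v x| ^ (p x / (p x - 1))) := by
    intro v hvm
    have hjm : AEMeasurable (fun x => ENNReal.ofReal
        (φ x ^ (-1 / (p x - 1)) * |v x| ^ (p x / (p x - 1)))) volume :=
      ((hφm.pow hexp1.aemeasurable).mul
        (((continuous_abs.measurable.comp hvm).pow hexp2).aemeasurable)).ennreal_ofReal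
    have hae : ∀ᵐ (x : EuclideanSpace ℝ (Fin N)) ∂volume,
        (‖u x * v x‖₊ : ℝ≥0∞) ≤
          ENNReal.ofReal ε * ENNReal.ofReal (|u x| ^ (p x) * φ x) +
          ENNReal.ofReal C0 * ENNReal.ofReal
            (φ x ^ (-1 / (p x - 1)) * |v x| ^ (p x / (p x - 1))) := by
      filter_upwards [hpbd] with x hx
      rw [← enorm_eq_nnnorm, Real.enorm_eq_ofReal_abs, ← ENNReal.ofReal_mul hε0.le,
        ← ENNReal.ofReal_mul hC00.le,
        ← ENNReal.ofReal_add (mul_nonneg hε0.le (mul_nonneg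
          (Real.rpow_nonneg (abs_nonneg _) _) (hφpos x).le)) (mul_nonneg hC00.le
          (mul_nonneg (Real.rpow_nonneg (hφpos x).le _)
            (Real.rpow_nonneg (abs_nonneg _) _)))]
      apply ENNReal.ofReal_le_ofReal
      have hy := young_aux (a := u x) (b := v x) hp1 hx.1 ht0 ht1 (hφpos x)
      rwa [hteq] at hy
    calc (∫⁻ x, (‖u x * v x‖₊ : ℝ≥0∞)) ≤
        ∫⁻ x, (ENNReal.ofReal ε * ENNReal.ofReal (|u x| ^ (p x) * φ x) +
          ENNReal.ofReal C0 * ENNReal.ofReal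
            (φ x ^ (-1 / (p x - 1)) * |v x| ^ (p x / (p x - 1)))) :=
          lintegral_mono_ae hae
      _ = ENNReal.ofReal ε * I + ENNReal.ofReal C0 *
          ∫⁻ x, ENNReal.ofReal (φ x ^ (-1 / (p x - 1)) * |v x| ^ (p x / (p x - 1))) := by
          rw [lintegral_add_left' (hf1m.const_mul _),
            lintegral_const_mul' _ _ ENNReal.ofReal_ne_top,
            lintegral_const_mul' _ _ ENNReal.ofReal_ne_top]
  set A := ∫ x : EuclideanSpace ℝ (Fin N), u x * g x with hAdef
  set B := ∫ x : EuclideanSpace ℝ (Fin N), u x * h x with hBdef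
  have hA' : ENNReal.ofReal |A| ≤ ∫⁻ x, (‖u x * g x‖₊ : ℝ≥0∞) := by
    rw [← Real.enorm_eq_ofReal_abs]
    exact enorm_integral_le_lintegral_enorm _
  have hB' : ENNReal.ofReal |B| ≤ ∫⁻ x, (‖u x * h x‖₊ : ℝ≥0∞) := by
    rw [← Real.enorm_eq_ofReal_abs]
    exact enorm_integral_le_lintegral_enorm _
  set S := ENNReal.ofReal C0 * (Jg + ENNReal.ofReal |lam| * Jh) with hSdef
  have hhalf : ENNReal.ofReal ε + ENNReal.ofReal |lam| * ENNReal.ofReal ε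
      = ENNReal.ofReal 2⁻¹ := by
    rw [← ENNReal.ofReal_mul (abs_nonneg _),
      ← ENNReal.ofReal_add hε0.le (by positivity)]
    congr 1
    rw [hεdef]
    field_simp
  have hkey : I ≤ ENNReal.ofReal 2⁻¹ * I + S := by
    calc I ≤ ENNReal.ofReal (A + lam * B) := hI_le
      _ ≤ ENNReal.ofReal |A| + ENNReal.ofReal |lam| * ENNReal.ofReal |B| := by
          calc ENNReal.ofReal (A + lam * B) ≤ ENNReal.ofReal (|A| + |lam| * |B|) := by
                apply ENNReal.ofReal_le_ofReal
                calc A + lam * B ≤ |A + lam * B| := le_abs_self _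
                  _ ≤ |A| + |lam * B| := abs_add_le _ _
                  _ = |A| + |lam| * |B| := by rw [abs_mul]
            _ = ENNReal.ofReal |A| + ENNReal.ofReal (|lam| * |B|) :=
                ENNReal.ofReal_add (abs_nonneg _) (by positivity)
            _ = ENNReal.ofReal |A| + ENNReal.ofReal |lam| * ENNReal.ofReal |B| := by
                rw [ENNReal.ofReal_mul (abs_nonneg _)]
      _ ≤ (∫⁻ x, (‖u x * g x‖₊ : ℝ≥0∞)) +
          ENNReal.ofReal |lam| * ∫⁻ x, (‖u x * h x‖₊ : ℝ≥0∞) :=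
          add_le_add hA' (mul_le_mul_right hB' _)
      _ ≤ (ENNReal.ofReal ε * I + ENNReal.ofReal C0 * Jg) +
          ENNReal.ofReal |lam| * (ENNReal.ofReal ε * I + ENNReal.ofReal C0 * Jh) :=
          add_le_add (key g hgm) (mul_le_mul_right (key h hhm) _)
      _ = (ENNReal.ofReal ε + ENNReal.ofReal |lam| * ENNReal.ofReal ε) * I +
          ENNReal.ofReal C0 * (Jg + ENNReal.ofReal |lam| * Jh) := by ring
      _ = ENNReal.ofReal 2⁻¹ * I + S := by rw [hhalf, hSdef]
  have hIsplit : ENNReal.ofReal 2⁻¹ * I + ENNReal.ofReal 2⁻¹ * I = I := by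
    rw [← add_mul, ← ENNReal.ofReal_add (by norm_num) (by norm_num)]
    norm_num
  have hmulfin : ENNReal.ofReal 2⁻¹ * I ≠ ⊤ := ENNReal.mul_ne_top ENNReal.ofReal_ne_top hIfin
  have h2 : ENNReal.ofReal 2⁻¹ * I + ENNReal.ofReal 2⁻¹ * I ≤ ENNReal.ofReal 2⁻¹ * I + S := by
    calc ENNReal.ofReal 2⁻¹ * I + ENNReal.ofReal 2⁻¹ * I = I := hIsplit
      _ ≤ ENNReal.ofReal 2⁻¹ * I + S := hkey
  have h3 : ENNReal.ofReal 2⁻¹ * I ≤ S := (ENNReal.add_le_add_iff_left hmulfin).1 h2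
  calc I = ENNReal.ofReal 2 * (ENNReal.ofReal 2⁻¹ * I) := by
        rw [← mul_assoc, ← ENNReal.ofReal_mul (by norm_num)]
        norm_num
    _ ≤ ENNReal.ofReal 2 * S := mul_le_mul_right h3 _
    _ = ENNReal.ofReal (2 * C0) * (Jg + ENNReal.ofReal |lam| * Jh) := by
        rw [hSdef, ← mul_assoc, ← ENNReal.ofReal_mul (by norm_num)]
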